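/- arXiv:1606.02449 — 2 statements merged into one kernel-verified Lean document; each statement's English description precedes it below -/
import Mathlib

section
/- Let X be an infinite connected graph with bounded degree containing a Morse quasi-geodesic γ_0 which is a bi-infinite geodesic. Then there exists an increasing function φ : ℝ₊ → ℝ₊ with φ(t) → ∞ as t → ∞ such that: whenever x, y lie on γ_0, vertices x', y' satisfy d(x,x') = d(y,y') = R and d(x',y') ≥ 10R, and γ is a path from x' to y' staying outside the R-neighborhood of γ_0, then |γ| ≥ φ(R)·d(x,y). -/
/-- A bi-infinite (C,K)-quasi-geodesic path in a graph. -/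
def IsQG {V : Type*} (G : SimpleGraph V) (C K : ℝ) (γ : ℤ → V) : Prop :=
  (∀ n : ℤ, G.Adj (γ n) (γ (n+1))) ∧
  ∀ i j : ℤ, i ≤ j → ((j - i : ℤ) : ℝ) ≤ C * G.dist (γ i) (γ j) + K

/-- A finite (C,K)-quasi-geodesic path (walk). -/
def IsFinQG {V : Type*} (G : SimpleGraph V) (C K : ℝ) {u v : V} (p : G.Walk u v) : Prop :=
  ∀ i j : ℕ, i ≤ j → j ≤ p.length →
    ((j - i : ℕ) : ℝ) ≤ C * G.dist (p.getVert i) (p.getVert j) + K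

/-- A Morse quasi-geodesic. -/
def IsMorse {V : Type*} (G : SimpleGraph V) (γ : ℤ → V) : Prop :=
  (∃ C K : ℝ, 1 ≤ C ∧ 0 ≤ K ∧ IsQG G C K γ) ∧
  ∀ C K : ℝ, 1 ≤ C → 0 < K → ∃ R : ℕ, ∀ (a b : ℤ) (p : G.Walk (γ a) (γ b)),
    IsFinQG G C K p → ∀ z ∈ p.support, ∃ m : ℤ, G.dist z (γ m) ≤ R

namespace Stmt15Aux
open SimpleGraph

variable {V : Type*} {G : SimpleGraph V}

def wtake {u v : V} : (w : G.Walk u v) → (n : ℕ) → G.Walk u (w.getVert n)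
  | .nil, _ => .nil
  | .cons _ _, 0 => .nil
  | .cons h p, (n+1) => .cons h (wtake p n)

def wdrop {u v : V} : (w : G.Walk u v) → (n : ℕ) → G.Walk (w.getVert n) v
  | .nil, _ => .nil
  | .cons h p, 0 => .cons h p
  | .cons h p, (n+1) => wdrop p n

theorem length_wtake {u v : V} (w : G.Walk u v) (n : ℕ) :
    (wtake w n).length = min n w.length := by
  induction w generalizing n with
  | nil => simp [wtake]
  | cons h p ih =>
    cases n with
    | zero => simp [wtake]; rfl
    | succ n => show (wtake p n).length + 1 = _; rw [ih]; simp only [Walk.length_cons]; omega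

theorem length_wdrop {u v : V} (w : G.Walk u v) (n : ℕ) :
    (wdrop w n).length = w.length - n := by
  induction w generalizing n with
  | nil => simp [wdrop]
  | cons h p ih =>
    cases n with
    | zero => simp [wdrop]; rfl
    | succ n => show (wdrop p n).length = _; rw [ih]; simp only [Walk.length_cons]; omega

theorem support_wtake_subset {u v : V} (w : G.Walk u v) (n : ℕ) {z : V}
    (hz : z ∈ (wtake w n).support) : z ∈ w.support := by
  induction w generalizing n with
  | nil => simpa [wtake] using hz
  | cons h p ih =>
    cases n with
    | zero =>
      simp only [wtake] at hz
      have := Walk.mem_support_nil_iff.mp hz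
      subst this
      exact (Walk.cons h p).start_mem_support
    | succ n =>
      rw [wtake] at hz
      rcases List.mem_cons.mp hz with h1 | h1
      · simp [h1]
      · simp [Walk.support_cons, ih n h1]

theorem support_wdrop_subset {u v : V} (w : G.Walk u v) (n : ℕ) {z : V}
    (hz : z ∈ (wdrop w n).support) : z ∈ w.support := by
  induction w generalizing n with
  | nil => simpa [wdrop] using hz
  | cons h p ih =>
    cases n with
    | zero => exact hz
    | succ n => simp [Walk.support_cons, ih n (by simpa [wdrop] using hz)]

theorem dist_start_le {u v : V} (w : G.Walk u v) {z : V} (hz : z ∈ w.support) :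
    G.dist u z ≤ w.length := by
  classical
  exact le_trans (SimpleGraph.dist_le (w.takeUntil z hz)) (Walk.length_takeUntil_le w hz)

theorem dist_end_le {u v : V} (w : G.Walk u v) {z : V} (hz : z ∈ w.support) :
    G.dist z v ≤ w.length := by
  classical
  exact le_trans (SimpleGraph.dist_le (w.dropUntil z hz)) (Walk.length_dropUntil_le w hz)

/-- The tautening lemma: any walk can be shortcut into a `(C, 1/2)`-quasi-geodesic walk
with the same endpoints, where the total length of inserted geodesics is accounted for
by a vertex pool `P` of controlled size. -/
theorem taut [DecidableEq V] (hconn : G.Connected) (C : ℝ) (hC : 1 ≤ C) :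
    ∀ (n : ℕ) {u v : V} (B : G.Walk u v), B.length ≤ n →
    ∃ (W : G.Walk u v) (S : ℕ) (P : Finset V),
      IsFinQG G C (1/2) W ∧
      ((W.length : ℝ) + (C - 1) * S ≤ (B.length : ℝ)) ∧
      (∀ z ∈ W.support, z ∈ B.support ∨ z ∈ P) ∧
      P.card ≤ 2 * S := by
  intro n
  induction n with
  | zero =>
    intro u v B hB
    refine ⟨B, 0, ∅, ?_, by simp, fun z hz => Or.inl hz, by simp⟩
    intro i j hij hj
    have hj0 : j = 0 := by omega
    have hi0 : i = 0 := by omega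
    subst hj0; subst hi0
    simp only [Nat.sub_self, Nat.cast_zero, Walk.getVert_zero, SimpleGraph.dist_self,
      mul_zero]
    norm_num
  | succ n ih =>
    intro u v B hB
    by_cases hQG : IsFinQG G C (1/2) B
    · exact ⟨B, 0, ∅, hQG, by simp, fun z hz => Or.inl hz, by simp⟩
    · unfold IsFinQG at hQG
      push_neg at hQG
      obtain ⟨i₀, j₀, hij, hjlen, hbad⟩ := hQG
      obtain ⟨g, hg⟩ := (hconn.preconnected (B.getVert i₀) (B.getVert j₀)).exists_walk_length_eq_dist
      set ds := G.dist (B.getVert i₀) (B.getVert j₀) with hdsdef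
      have hcast : ((j₀ - i₀ : ℕ) : ℝ) = (j₀ : ℝ) - (i₀ : ℝ) := by
        exact Nat.cast_sub hij
      have hdsC : C * (ds : ℝ) + 1/2 < (j₀ : ℝ) - i₀ := by rw [← hcast]; exact hbad
      have hdslt : i₀ + ds < j₀ := by
        by_contra hcon
        push_neg at hcon
        have h1 : ((j₀ - i₀ : ℕ) : ℝ) ≤ (ds : ℝ) := by exact_mod_cast (by omega : j₀ - i₀ ≤ ds)
        have h2 : (ds : ℝ) ≤ C * ds := le_mul_of_one_le_left (Nat.cast_nonneg _) hC
        rw [hcast] at h1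
        linarith
      set B' : G.Walk u v := (wtake B i₀).append (g.append (wdrop B j₀)) with hB'def
      have hlenB' : B'.length = i₀ + (ds + (B.length - j₀)) := by
        simp [hB'def, Walk.length_append, length_wtake, length_wdrop, hg,
          min_eq_left (le_trans hij hjlen)]
      have hlt : B'.length ≤ n := by omega
      obtain ⟨W, S', P', hW1, hW2, hW3, hW4⟩ := ih B' hlt
      have hsubB' : ∀ z ∈ B'.support, z ∈ B.support ∨ z ∈ g.support := by
        intro z hz
        rw [hB'def, Walk.mem_support_append_iff] at hz
        rcases hz with hz | hz
        · exact Or.inl (support_wtake_subset B i₀ hz)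
        · rw [Walk.mem_support_append_iff] at hz
          rcases hz with hz | hz
          · exact Or.inr hz
          · exact Or.inl (support_wdrop_subset B j₀ hz)
      have hcastlen : ((B'.length : ℕ) : ℝ) = (i₀ : ℝ) + ds + ((B.length : ℝ) - j₀) := by
        rw [hlenB']
        push_cast [Nat.cast_sub hjlen]
        ring
      have hacc : ∀ S : ℕ, (S : ℝ) = S' + ds →
          (W.length : ℝ) + (C - 1) * S ≤ (B.length : ℝ) := by
        intro S hS
        have h1 : (W.length : ℝ) + (C - 1) * S' ≤ (B'.length : ℝ) := hW2
        rw [hcastlen] at h1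
        have h2 : (C - 1) * (ds : ℝ) ≤ (j₀ : ℝ) - i₀ - ds := by nlinarith [Nat.cast_nonneg (α := ℝ) ds]
        rw [hS]
        nlinarith
      rcases Nat.eq_zero_or_pos ds with hds0 | hds1
      · -- trivial geodesic: no new vertices
        refine ⟨W, S', P', hW1, ?_, ?_, hW4⟩
        · have := hacc S' (by rw [hds0]; push_cast; ring)
          exact this
        · intro z hz
          rcases hW3 z hz with hz' | hz'
          · rcases hsubB' z hz' with h | h
            · exact Or.inl h
            · -- z ∈ g.support, g.length = ds = 0, so z = B.getVert i₀ ∈ B.support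
              have hdz : G.dist (B.getVert i₀) z = 0 := by
                have := dist_start_le g h
                omega
              have hzz : z = B.getVert i₀ := ((hconn.dist_eq_zero_iff).mp hdz).symm
              refine Or.inl ?_
              rw [hzz]
              exact Walk.mem_support_iff_exists_getVert.mpr ⟨i₀, rfl, by omega⟩
          · exact Or.inr hz'
      · refine ⟨W, S' + ds, P' ∪ g.support.toFinset, hW1, hacc _ (by push_cast; ring), ?_, ?_⟩
        · intro z hz
          rcases hW3 z hz with hz' | hz'
          · rcases hsubB' z hz' with h | h
            · exact Or.inl h
            · exact Or.inr (Finset.mem_union_right _ (List.mem_toFinset.mpr h))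
          · exact Or.inr (Finset.mem_union_left _ hz')
        · calc (P' ∪ g.support.toFinset).card ≤ P'.card + g.support.toFinset.card :=
                Finset.card_union_le _ _
            _ ≤ 2 * S' + g.support.length := by
                have := g.support.toFinset_card_le
                omega
            _ = 2 * S' + (ds + 1) := by rw [Walk.length_support, hg]
            _ ≤ 2 * (S' + ds) := by omega

/-- Discrete intermediate value theorem along a walk for distance to `x₀`. -/
theorem ivt (hconn : G.Connected) (x₀ : V) {a b : V} (w : G.Walk a b) :
    ∀ t : ℕ, G.dist a x₀ ≤ t → t ≤ G.dist b x₀ → ∃ z ∈ w.support, G.dist z x₀ = t := by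
  induction w with
  | nil => exact fun t h1 h2 => ⟨_, by simp, le_antisymm h1 h2⟩
  | @cons a c b hadj p ih =>
    intro t h1 h2
    by_cases he : G.dist a x₀ = t
    · exact ⟨a, by simp, he⟩
    · have hlt : G.dist a x₀ < t := lt_of_le_of_ne h1 he
      have hca : G.dist c x₀ ≤ G.dist c a + G.dist a x₀ := hconn.dist_triangle
      have hca1 : G.dist c a ≤ 1 := by
        have : G.dist c a ≤ (Walk.cons hadj.symm Walk.nil).length := SimpleGraph.dist_le _
        simpa using this
      obtain ⟨z, hz1, hz2⟩ := ih t (by omega) h2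
      exact ⟨z, by simp [Walk.support_cons, hz1], hz2⟩

/-- Core divergence estimate: for every `D` there is `R₀` such that every
avoidant configuration at radius `R ≥ R₀` has `|γ| ≥ D · d(γ₀ i, γ₀ j)`. -/
theorem core (hconn : G.Connected) (γ₀ : ℤ → V) (hM : IsMorse G γ₀) (D : ℝ) :
    ∃ R₀ : ℕ, ∀ (R : ℕ), R₀ ≤ R → ∀ (i j : ℤ) (x' y' : V) (γ : G.Walk x' y'),
      G.dist x' (γ₀ i) = R → G.dist y' (γ₀ j) = R → 10 * R ≤ G.dist x' y' →
      (∀ z ∈ γ.support, ∀ k : ℤ, R ≤ G.dist z (γ₀ k)) →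
      D * (G.dist (γ₀ i) (γ₀ j) : ℝ) ≤ (γ.length : ℝ) := by
  classical
  set m := max D 1 with hm
  have hm1 : (1:ℝ) ≤ m := le_max_right _ _
  have hmD : D ≤ m := le_max_left _ _
  set C : ℝ := 16 * m with hCdef
  have hC1 : (1:ℝ) ≤ C := by rw [hCdef]; linarith
  obtain ⟨M, hMorse⟩ := hM.2 C (1/2) hC1 (by norm_num)
  refine ⟨M + 2, ?_⟩
  intro R hR i j x' y' γ hx hy hxy havoid
  set dN := G.dist (γ₀ i) (γ₀ j) with hdN
  have t1 : G.dist x' y' ≤ G.dist x' (γ₀ i) + G.dist (γ₀ i) y' := hconn.dist_triangle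
  have t2 : G.dist (γ₀ i) y' ≤ G.dist (γ₀ i) (γ₀ j) + G.dist (γ₀ j) y' := hconn.dist_triangle
  have t3 : G.dist (γ₀ j) y' = R := by rw [SimpleGraph.dist_comm]; exact hy
  have hdN8 : 8 * R ≤ dN := by omega
  obtain ⟨w1, hw1⟩ := hconn.exists_walk_length_eq_dist x' (γ₀ i)
  obtain ⟨w2, hw2⟩ := hconn.exists_walk_length_eq_dist y' (γ₀ j)
  set B : G.Walk (γ₀ i) (γ₀ j) := w1.reverse.append (γ.append w2) with hB
  have hBlen : B.length = R + (γ.length + R) := by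
    have h0 : B.length = w1.length + (γ.length + w2.length) := by
      simp [hB, Walk.length_append, Walk.length_reverse]
    rw [h0, hw1, hw2, hx, hy]
  obtain ⟨W, S, P, hQ, haccW, hsupp, hcard⟩ := taut hconn C hC1 B.length B le_rfl
  have hMor := hMorse i j W hQ
  have key : ∀ lam : ℕ, 2*R + 1 ≤ lam → lam + 2*R + 1 ≤ dN →
      lam ∈ P.image (fun z => G.dist z (γ₀ i)) := by
    intro lam h1 h2
    obtain ⟨z, hzsupp, hzd⟩ := ivt hconn (γ₀ i) W lam
      (by simp [SimpleGraph.dist_self]) (by rw [SimpleGraph.dist_comm]; omega)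
    obtain ⟨mm, hmm⟩ := hMor z hzsupp
    rcases hsupp z hzsupp with hBs | hP
    · exfalso
      rw [hB, Walk.mem_support_append_iff] at hBs
      rcases hBs with h | h
      · have hd1 : G.dist (γ₀ i) z ≤ w1.reverse.length := dist_start_le _ h
        rw [Walk.length_reverse, hw1, hx] at hd1
        rw [SimpleGraph.dist_comm] at hd1
        omega
      · rw [Walk.mem_support_append_iff] at h
        rcases h with h | h
        · have := havoid z h mm
          omega
        · have hd2 : G.dist z (γ₀ j) ≤ w2.length := dist_end_le _ h
          rw [hw2, hy] at hd2
          have hdd : G.dist (γ₀ i) (γ₀ j) ≤ G.dist (γ₀ i) z + G.dist z (γ₀ j) :=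
            hconn.dist_triangle
          rw [SimpleGraph.dist_comm (u := γ₀ i) (v := z)] at hdd
          omega
    · exact Finset.mem_image.mpr ⟨z, hP, hzd⟩
  have hcount : dN ≤ 2 * S + 4 * R + 2 := by
    by_cases hbig : dN ≤ 4*R + 2
    · omega
    · push_neg at hbig
      set Lam : Finset ℕ := Finset.Icc (2*R+1) (dN - (2*R+1)) with hLam
      have hsub : Lam ⊆ P.image (fun z => G.dist z (γ₀ i)) := by
        intro lam hlam
        rw [hLam, Finset.mem_Icc] at hlam
        exact key lam hlam.1 (by omega)
      have hLamcard : Lam.card = dN - (4*R + 1) := by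
        rw [hLam, Nat.card_Icc]; omega
      have hc1 := Finset.card_le_card hsub
      have himg := Finset.card_image_le (s := P) (f := fun z => G.dist z (γ₀ i))
      omega
  have hWlen : (dN : ℝ) ≤ (W.length : ℝ) := by exact_mod_cast SimpleGraph.dist_le W
  have hBcast : (B.length : ℝ) = (γ.length : ℝ) + 2 * R := by rw [hBlen]; push_cast; ring
  have hScast : (dN : ℝ) ≤ 2 * (S:ℝ) + 4*(R:ℝ) + 2 := by exact_mod_cast hcount
  have hR2 : (2:ℝ) ≤ (R:ℝ) := by exact_mod_cast (by omega : 2 ≤ R)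
  have hdN8' : 8 * (R:ℝ) ≤ (dN:ℝ) := by exact_mod_cast hdN8
  have hdn0 : (0:ℝ) ≤ (dN:ℝ) := Nat.cast_nonneg _
  have h38 : (3/8) * (dN:ℝ) ≤ (dN:ℝ) - 4*R - 2 := by linarith
  have hprod : (16*m - 1) * ((3/8) * (dN:ℝ)) ≤ (16*m-1) * ((dN:ℝ) - 4*R - 2) :=
    mul_le_mul_of_nonneg_left h38 (by linarith)
  have hprod2 : (16*m-1) * ((dN:ℝ) - 4*R - 2) ≤ (16*m-1) * (2*(S:ℝ)) :=
    mul_le_mul_of_nonneg_left (by linarith) (by linarith)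
  have hgl : (γ.length : ℝ) ≥ (dN:ℝ) + (C-1) * S - 2*R := by
    rw [hBcast] at haccW
    linarith
  have e1 : D * (dN:ℝ) ≤ m * dN := mul_le_mul_of_nonneg_right hmD hdn0
  have e2 : m * (dN:ℝ) ≤ (3*m - 3/16) * dN := mul_le_mul_of_nonneg_right (by linarith) hdn0
  have e3 : (3*m - 3/16) * (dN:ℝ) = (16*m - 1) * ((3/8)*(dN:ℝ)) / 2 := by ring
  have e4 : D * (dN:ℝ) ≤ (C - 1) * S := by
    rw [hCdef]
    linarith
  linarith

end Stmt15Aux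

/-- Lemma lem:MQG: for a Morse bi-infinite geodesic γ₀ in an infinite
connected bounded-degree graph, there is an increasing φ with φ(t) → ∞ such that any
path γ from x' to y' with d(x,x') = d(y,y') = R (x, y on γ₀), d(x',y') ≥ 10R, staying
outside the R-neighborhood of γ₀, has |γ| ≥ φ(R)·d(x,y). -/
theorem stmt_15 {V : Type*} (G : SimpleGraph V) (hconn : G.Connected) (hinf : Infinite V)
    (q : ℕ) (hdeg : ∀ v : V, (G.neighborSet v).ncard ≤ q)
    (γ₀ : ℤ → V) (hgeo : ∀ m n : ℤ, G.dist (γ₀ m) (γ₀ n) = (m - n).natAbs)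
    (hM : IsMorse G γ₀) :
    ∃ φ : ℝ → ℝ, (∀ t, 0 ≤ t → 0 ≤ φ t) ∧ Monotone φ ∧
      Filter.Tendsto φ Filter.atTop Filter.atTop ∧
      ∀ (R : ℕ) (i j : ℤ) (x' y' : V) (γ : G.Walk x' y'),
        G.dist x' (γ₀ i) = R → G.dist y' (γ₀ j) = R → 10 * R ≤ G.dist x' y' →
        (∀ z ∈ γ.support, ∀ k : ℤ, R ≤ G.dist z (γ₀ k)) →
        φ R * (G.dist (γ₀ i) (γ₀ j) : ℝ) ≤ (γ.length : ℝ) := by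
  classical
  set Cfg : ℝ → Set ℝ := fun t =>
    insert t {r : ℝ | ∃ (R : ℕ) (i j : ℤ) (x' y' : V) (γ : G.Walk x' y'),
      t ≤ (R : ℝ) ∧ G.dist x' (γ₀ i) = R ∧ G.dist y' (γ₀ j) = R ∧
      10 * R ≤ G.dist x' y' ∧ (∀ z ∈ γ.support, ∀ k : ℤ, R ≤ G.dist z (γ₀ k)) ∧
      0 < G.dist (γ₀ i) (γ₀ j) ∧ r = (γ.length : ℝ) / (G.dist (γ₀ i) (γ₀ j) : ℝ)} with hCfg
  have hmem_ratio : ∀ t r, r ∈ Cfg t → r = t ∨ 0 ≤ r := by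
    intro t r hr
    rcases Set.mem_insert_iff.mp hr with h | h
    · exact Or.inl h
    · obtain ⟨R, i, j, x', y', γ, _, _, _, _, _, hdpos, hre⟩ := h
      exact Or.inr (hre ▸ div_nonneg (Nat.cast_nonneg _) (Nat.cast_nonneg _))
  have hne : ∀ t : ℝ, (Cfg t).Nonempty := fun t => ⟨t, Set.mem_insert _ _⟩
  have hbdd : ∀ t : ℝ, BddBelow (Cfg t) := by
    intro t
    refine ⟨min t 0, fun r hr => ?_⟩
    rcases hmem_ratio t r hr with h | h
    · rw [h]; exact min_le_left _ _
    · exact le_trans (min_le_right _ _) h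
  set φ : ℝ → ℝ := fun t => sInf (Cfg t) with hφ
  have hφle : ∀ t, φ t ≤ t := fun t => csInf_le (hbdd t) (Set.mem_insert _ _)
  have hmemCfg : ∀ s t : ℝ, s ≤ t → ∀ r ∈ Cfg t, r = t ∨ r ∈ Cfg s := by
    intro s t hst r hr
    rcases Set.mem_insert_iff.mp hr with h | h
    · exact Or.inl h
    · refine Or.inr (Set.mem_insert_iff.mpr (Or.inr ?_))
      obtain ⟨R, i, j, x', y', γ, htR, h2, h3, h4, h5, h6, h7⟩ := h
      exact ⟨R, i, j, x', y', γ, le_trans hst htR, h2, h3, h4, h5, h6, h7⟩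
  refine ⟨φ, ?_, ?_, ?_, ?_⟩
  · intro t ht
    apply Real.sInf_nonneg
    intro r hr
    rcases hmem_ratio t r hr with h | h
    · rw [h]; exact ht
    · exact h
  · intro s t hst
    refine le_csInf (hne t) ?_
    intro r hr
    rcases hmemCfg s t hst r hr with h | h
    · rw [h]; exact le_trans (hφle s) hst
    · exact csInf_le (hbdd s) h
  · rw [Filter.tendsto_atTop]
    intro b
    obtain ⟨R₀, hcore⟩ := Stmt15Aux.core hconn γ₀ hM b
    rw [Filter.eventually_atTop]
    refine ⟨max b (R₀ : ℝ), fun t ht => ?_⟩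
    refine le_csInf (hne t) ?_
    intro r hr
    rcases Set.mem_insert_iff.mp hr with h | h
    · rw [h]; exact le_trans (le_max_left _ _) ht
    · obtain ⟨R, i, j, x', y', γ, htR, h2, h3, h4, h5, h6, h7⟩ := h
      have hRR : R₀ ≤ R := by
        have : (R₀ : ℝ) ≤ (R : ℝ) := le_trans (le_trans (le_max_right b _) ht) htR
        exact_mod_cast this
      have hb := hcore R hRR i j x' y' γ h2 h3 h4 h5
      have hdpos : (0:ℝ) < (G.dist (γ₀ i) (γ₀ j) : ℝ) := by exact_mod_cast h6
      rw [h7, le_div_iff₀ hdpos]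
      exact hb
  · intro R i j x' y' γ h1 h2 h3 h4
    by_cases hd : G.dist (γ₀ i) (γ₀ j) = 0
    · rw [hd]
      simp only [Nat.cast_zero, mul_zero]
      positivity
    · have hdpos : 0 < G.dist (γ₀ i) (γ₀ j) := Nat.pos_of_ne_zero hd
      have hmem : (γ.length : ℝ) / (G.dist (γ₀ i) (γ₀ j) : ℝ) ∈ Cfg (R : ℝ) :=
        Set.mem_insert_iff.mpr (Or.inr ⟨R, i, j, x', y', γ, le_refl _, h1, h2, h3, h4, hdpos, rfl⟩)
      have hle : φ R ≤ (γ.length : ℝ) / (G.dist (γ₀ i) (γ₀ j) : ℝ) := csInf_le (hbdd _) hmem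
      have hdpos' : (0:ℝ) < (G.dist (γ₀ i) (γ₀ j) : ℝ) := by exact_mod_cast hdpos
      calc φ R * (G.dist (γ₀ i) (γ₀ j) : ℝ)
          ≤ ((γ.length : ℝ) / (G.dist (γ₀ i) (γ₀ j) : ℝ)) * (G.dist (γ₀ i) (γ₀ j) : ℝ) :=
            mul_le_mul_of_nonneg_right hle (le_of_lt hdpos')
        _ = (γ.length : ℝ) := div_mul_cancel₀ _ (ne_of_gt hdpos')
end

section
/- Let X be a locally finite connected graph with a vertex o, and suppose for each n we are given a path γ^n from x_n to y_n, where d(o,x_n) → ∞ and d(o,y_n) → ∞, such that every γ^n passes through a fixed finite set A of vertices and each γ^n is a d_ω-geodesic. Then there exists a bi-infinite d_ω-geodesic in X, obtained as a subsequential limit of the γ^n (using that d_ω-balls are finite). -/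
noncomputable def dW {V : Type*} (G : SimpleGraph V) (w : Sym2 V → ℝ) (u v : V) : ENNReal :=
  ⨅ p : G.Walk u v, ENNReal.ofReal (p.edges.map w).sum

open SimpleGraph Filter

section Aux
variable {V : Type*} {G : SimpleGraph V} {w : Sym2 V → ℝ}

lemma len_nonneg (hw : ∀ e ∈ G.edgeSet, 0 < w e) {u v : V} (p : G.Walk u v) :
    0 ≤ (p.edges.map w).sum := by
  apply List.sum_nonneg
  intro a ha
  obtain ⟨e, he, rfl⟩ := List.mem_map.mp ha
  exact (hw e (p.edges_subset_edgeSet he)).le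

lemma dW_le {u v : V} (p : G.Walk u v) :
    dW G w u v ≤ ENNReal.ofReal (p.edges.map w).sum := iInf_le _ p

lemma dW_self (u : V) : dW G w u u = 0 := by
  refine le_antisymm (le_trans (dW_le Walk.nil) ?_) zero_le
  simp

lemma dW_triangle (x y z : V) : dW G w x z ≤ dW G w x y + dW G w y z := by
  conv_rhs => rw [dW, ENNReal.iInf_add]
  refine le_iInf fun p => ?_
  conv_rhs => rw [dW, ENNReal.add_iInf]
  refine le_iInf fun q => ?_
  refine le_trans (dW_le (p.append q)) ?_
  rw [Walk.edges_append, List.map_append, List.sum_append]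
  exact ENNReal.ofReal_add_le

lemma dW_adj {u v : V} (h : G.Adj u v) :
    dW G w u v ≤ ENNReal.ofReal (w s(u, v)) := by
  refine le_trans (dW_le (Walk.cons h Walk.nil)) ?_
  simp

lemma dW_chain_le (hw : ∀ e ∈ G.edgeSet, 0 < w e) (g : ℕ → V) (i j : ℕ) (hij : i ≤ j)
    (hadj : ∀ k, i ≤ k → k < j → G.Adj (g k) (g (k + 1))) :
    dW G w (g i) (g j) ≤ ENNReal.ofReal (∑ k ∈ Finset.Ico i j, w s(g k, g (k + 1))) := by
  induction j, hij using Nat.le_induction with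
  | base => simp [dW_self]
  | succ j hij ih =>
    have hadj' : G.Adj (g j) (g (j + 1)) := hadj j hij (Nat.lt_succ_self j)
    have hnn : 0 ≤ ∑ k ∈ Finset.Ico i j, w s(g k, g (k + 1)) := by
      refine Finset.sum_nonneg fun k hk => ?_
      rw [Finset.mem_Ico] at hk
      exact (hw _ (G.mem_edgeSet.mpr (hadj k hk.1 (hk.2.trans (Nat.lt_succ_self j))))).le
    calc dW G w (g i) (g (j + 1)) ≤ dW G w (g i) (g j) + dW G w (g j) (g (j + 1)) :=
          dW_triangle _ _ _
      _ ≤ ENNReal.ofReal (∑ k ∈ Finset.Ico i j, w s(g k, g (k + 1)))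
          + ENNReal.ofReal (w s(g j, g (j + 1))) :=
          add_le_add (ih fun k hk hk' => hadj k hk (hk'.trans (Nat.lt_succ_self j))) (dW_adj hadj')
      _ = ENNReal.ofReal (∑ k ∈ Finset.Ico i (j + 1), w s(g k, g (k + 1))) := by
          rw [← ENNReal.ofReal_add hnn (hw _ (G.mem_edgeSet.mpr hadj')).le,
            Finset.sum_Ico_succ_top hij]

lemma dist_getVert_le (hconn : G.Connected) {u v : V} (p : G.Walk u v) (s m : ℕ)
    (hsm : s ≤ m) (hml : m ≤ p.length) : G.dist (p.getVert s) (p.getVert m) ≤ m - s := by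
  induction m, hsm using Nat.le_induction with
  | base => simp [SimpleGraph.dist_self]
  | succ m hsm ih =>
    have hm : m < p.length := hml
    have hadj := p.adj_getVert_succ hm
    calc G.dist (p.getVert s) (p.getVert (m + 1))
        ≤ G.dist (p.getVert s) (p.getVert m) + G.dist (p.getVert m) (p.getVert (m + 1)) :=
          hconn.dist_triangle
      _ ≤ (m - s) + 1 := by
          refine add_le_add (ih hm.le) ?_
          simpa using SimpleGraph.dist_le (Walk.cons hadj Walk.nil)
      _ ≤ m + 1 - s := by omega

lemma sum_getVert_eq {u v : V} (p : G.Walk u v) :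
    (p.edges.map w).sum = ∑ k ∈ Finset.range p.length, w s(p.getVert k, p.getVert (k + 1)) := by
  induction p with
  | nil => simp
  | cons h q ih =>
    rw [Walk.edges_cons, List.map_cons, List.sum_cons, Walk.length_cons,
      Finset.sum_range_succ']
    simp only [Walk.getVert_cons_succ, Walk.getVert_zero]
    rw [ih, add_comm]

end Aux

section Aux2
variable {V : Type*} {G : SimpleGraph V} {w : Sym2 V → ℝ}

lemma sub_geodesic (hw : ∀ e ∈ G.edgeSet, 0 < w e) {u v : V} {p : G.Walk u v}
    (hgeo : ENNReal.ofReal ((p.edges.map w).sum) = dW G w u v)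
    (i j : ℕ) (hij : i ≤ j) (hjl : j ≤ p.length) :
    dW G w (p.getVert i) (p.getVert j)
      = ENNReal.ofReal (∑ k ∈ Finset.Ico i j, w s(p.getVert k, p.getVert (k + 1))) := by
  have hadj : ∀ k, k < p.length → G.Adj (p.getVert k) (p.getVert (k + 1)) :=
    fun k hk => p.adj_getVert_succ hk
  have hnn : ∀ a b : ℕ, b ≤ p.length →
      0 ≤ ∑ k ∈ Finset.Ico a b, w s(p.getVert k, p.getVert (k + 1)) := by
    intro a b hb
    refine Finset.sum_nonneg fun k hk => ?_
    rw [Finset.mem_Ico] at hk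
    exact (hw _ (G.mem_edgeSet.mpr (hadj k (lt_of_lt_of_le hk.2 hb)))).le
  have hle : dW G w (p.getVert i) (p.getVert j)
      ≤ ENNReal.ofReal (∑ k ∈ Finset.Ico i j, w s(p.getVert k, p.getVert (k + 1))) :=
    dW_chain_le hw p.getVert i j hij (fun k _ hk => hadj k (lt_of_lt_of_le hk hjl))
  refine le_antisymm hle ?_
  -- lower bound
  set A1 := ∑ k ∈ Finset.Ico 0 i, w s(p.getVert k, p.getVert (k + 1)) with hA1
  set A2 := ∑ k ∈ Finset.Ico i j, w s(p.getVert k, p.getVert (k + 1)) with hA2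
  set A3 := ∑ k ∈ Finset.Ico j p.length, w s(p.getVert k, p.getVert (k + 1)) with hA3
  have htot : (p.edges.map w).sum = A1 + A2 + A3 := by
    rw [sum_getVert_eq, Finset.range_eq_Ico, hA1, hA2, hA3,
      add_assoc, Finset.sum_Ico_consecutive _ hij hjl,
      Finset.sum_Ico_consecutive _ (Nat.zero_le i) (hij.trans hjl)]
  have h1 : dW G w u (p.getVert i) ≤ ENNReal.ofReal A1 := by
    have := dW_chain_le hw p.getVert 0 i (Nat.zero_le i)
      (fun k _ hk => hadj k (lt_of_lt_of_le hk (hij.trans hjl)))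
    rwa [p.getVert_zero] at this
  have h3 : dW G w (p.getVert j) v ≤ ENNReal.ofReal A3 := by
    have := dW_chain_le hw p.getVert j p.length hjl (fun k _ hk => hadj k hk)
    rwa [p.getVert_length] at this
  have hchain : ENNReal.ofReal A1 + ENNReal.ofReal A2 + ENNReal.ofReal A3
      ≤ ENNReal.ofReal A1 + dW G w (p.getVert i) (p.getVert j) + ENNReal.ofReal A3 := by
    have h01 : 0 ≤ A1 := hnn 0 i (hij.trans hjl)
    have h02 : 0 ≤ A2 := hnn i j hjl
    have h03 : 0 ≤ A3 := hnn j p.length le_rfl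
    calc ENNReal.ofReal A1 + ENNReal.ofReal A2 + ENNReal.ofReal A3
        = ENNReal.ofReal ((p.edges.map w).sum) := by
          rw [htot, ENNReal.ofReal_add (by linarith) h03, ENNReal.ofReal_add h01 h02]
      _ = dW G w u v := hgeo
      _ ≤ dW G w u (p.getVert i) + dW G w (p.getVert i) (p.getVert j)
            + dW G w (p.getVert j) v := by
          refine le_trans (dW_triangle u (p.getVert j) v) ?_
          exact add_le_add_left (dW_triangle u (p.getVert i) (p.getVert j)) _
      _ ≤ ENNReal.ofReal A1 + dW G w (p.getVert i) (p.getVert j) + ENNReal.ofReal A3 := by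
          exact add_le_add (add_le_add h1 le_rfl) h3
  have := (ENNReal.add_le_add_iff_right (by simp : ENNReal.ofReal A3 ≠ ⊤)).mp hchain
  exact (ENNReal.add_le_add_iff_left (by simp : ENNReal.ofReal A1 ≠ ⊤)).mp this

lemma finite_ball (hconn : G.Connected) (hlf : ∀ v : V, (G.neighborSet v).Finite) (a : V) :
    ∀ k : ℕ, {v : V | G.dist a v ≤ k}.Finite := by
  intro k
  induction k with
  | zero =>
    refine Set.Finite.subset (Set.finite_singleton a) ?_
    intro v hv
    simp only [Set.mem_setOf_eq, Nat.le_zero] at hv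
    rcases SimpleGraph.dist_eq_zero_iff_eq_or_not_reachable.mp hv with h | h
    · exact h.symm ▸ rfl
    · exact absurd (hconn a v) h
  | succ k ih =>
    refine Set.Finite.subset (ih.union (Set.Finite.biUnion ih (fun u _ => hlf u))) ?_
    intro v hv
    simp only [Set.mem_setOf_eq] at hv
    obtain ⟨q, hq⟩ := (hconn v a).exists_walk_length_eq_dist
    cases q with
    | nil => exact Or.inl (by simp [SimpleGraph.dist_self])
    | cons h r =>
      refine Or.inr ?_
      rename_i u'
      refine Set.mem_biUnion (show u' ∈ {v : V | G.dist a v ≤ k} from ?_) h.symm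
      have hr : G.dist a u' ≤ r.length := SimpleGraph.dist_comm ▸ SimpleGraph.dist_le r
      have : r.length + 1 = G.dist v a := by simpa using hq
      have : G.dist v a = G.dist a v := SimpleGraph.dist_comm
      simp only [Set.mem_setOf_eq]
      omega

end Aux2
/-- if d_ω-geodesics γⁿ between points x_n, y_n going to infinity all
pass through a fixed finite set A, and d_ω-balls are finite, then a subsequential
limit yields a bi-infinite d_ω-geodesic (a bi-infinite path all of whose finite
subpaths are d_ω-geodesics). -/
theorem stmt_19 {V : Type*} (G : SimpleGraph V) (hconn : G.Connected)
    (hlf : ∀ v : V, (G.neighborSet v).Finite)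
    (o : V) (w : Sym2 V → ℝ) (hw : ∀ e ∈ G.edgeSet, 0 < w e)
    (hballs : ∀ (u : V) (M : ℝ), {v : V | dW G w u v ≤ ENNReal.ofReal M}.Finite)
    (x y : ℕ → V) (p : ∀ n, G.Walk (x n) (y n))
    (hx : Filter.Tendsto (fun n => G.dist o (x n)) Filter.atTop Filter.atTop)
    (hy : Filter.Tendsto (fun n => G.dist o (y n)) Filter.atTop Filter.atTop)
    (A : Set V) (hA : A.Finite) (hApass : ∀ n, ∃ z ∈ (p n).support, z ∈ A)
    (hgeo : ∀ n, ENNReal.ofReal (((p n).edges.map w).sum) = dW G w (x n) (y n)) :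
    ∃ g : ℤ → V, (∀ n : ℤ, G.Adj (g n) (g (n+1))) ∧
      ∀ i j : ℤ, i ≤ j → dW G w (g i) (g j)
        = ENNReal.ofReal (∑ k ∈ Finset.Ico i j, w s(g k, g (k+1))) := by
  classical
  set U : Ultrafilter ℕ := Filter.hyperfilter ℕ with hUdef
  have hUat : (U : Filter ℕ) ≤ Filter.atTop := Nat.hyperfilter_le_atTop
  choose z hz1 hz2 using hApass
  have huniv : (⋃ a ∈ A, {n : ℕ | z n = a}) ∈ U := by
    have he : (⋃ a ∈ A, {n : ℕ | z n = a}) = Set.univ := by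
      ext n
      simp only [Set.mem_iUnion, Set.mem_setOf_eq, Set.mem_univ, iff_true]
      exact ⟨z n, hz2 n, rfl⟩
    rw [he]; exact Filter.univ_mem
  obtain ⟨a, haA, hSa⟩ := (Ultrafilter.finite_biUnion_mem_iff hA).mp huniv
  have hts : ∀ n, ∃ m, z n = a → ((p n).getVert m = a ∧ m ≤ (p n).length) := by
    intro n
    by_cases h : z n = a
    · obtain ⟨m, hm⟩ := SimpleGraph.Walk.mem_support_iff_exists_getVert.mp (h ▸ hz1 n)
      exact ⟨m, fun _ => hm⟩
    · exact ⟨0, fun h' => absurd h' h⟩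
  choose t ht using hts
  -- the key events
  have hP : ∀ M : ℕ, ∀ᶠ n in (U : Filter ℕ),
      (p n).getVert (t n) = a ∧ M ≤ t n ∧ t n + M ≤ (p n).length := by
    intro M
    have hxev := (hx.eventually_ge_atTop (M + G.dist o a)).filter_mono hUat
    have hyev := (hy.eventually_ge_atTop (M + G.dist o a)).filter_mono hUat
    have hSev : ∀ᶠ n in (U : Filter ℕ), z n = a := Ultrafilter.mem_coe.mpr hSa
    filter_upwards [hxev, hyev, hSev] with n hxn hyn hzn
    obtain ⟨hgva, htl⟩ := ht n hzn
    refine ⟨hgva, ?_, ?_⟩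
    · have h1 : G.dist (x n) a ≤ t n := by
        have := dist_getVert_le hconn (p n) 0 (t n) (Nat.zero_le _) htl
        simpa [hgva, SimpleGraph.Walk.getVert_zero] using this
      have h2 : G.dist o (x n) ≤ G.dist o a + G.dist a (x n) := hconn.dist_triangle
      have h3 : G.dist a (x n) = G.dist (x n) a := SimpleGraph.dist_comm
      omega
    · have h1 : G.dist a (y n) ≤ (p n).length - t n := by
        have := dist_getVert_le hconn (p n) (t n) (p n).length htl le_rfl
        simpa [hgva, SimpleGraph.Walk.getVert_length] using this
      have h2 : G.dist o (y n) ≤ G.dist o a + G.dist a (y n) := hconn.dist_triangle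
      omega
  have hball : ∀ i : ℤ, ∀ᶠ n in (U : Filter ℕ),
      G.dist a ((p n).getVert (((t n : ℤ) + i).toNat)) ≤ i.natAbs := by
    intro i
    filter_upwards [hP i.natAbs] with n hn
    obtain ⟨hgva, hM1, hM2⟩ := hn
    rcases le_or_gt 0 i with hi | hi
    · have hm : ((t n : ℤ) + i).toNat = t n + i.natAbs := by omega
      have hd := dist_getVert_le hconn (p n) (t n) (t n + i.natAbs)
        (Nat.le_add_right _ _) (by omega)
      rw [hm, ← hgva]
      exact le_trans hd (by omega)
    · have hm : ((t n : ℤ) + i).toNat = t n - i.natAbs := by omega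
      have hd := dist_getVert_le hconn (p n) (t n - i.natAbs) (t n)
        (by omega) (by omega)
      rw [hm, ← hgva, SimpleGraph.dist_comm]
      exact le_trans hd (by omega)
  have hgex : ∀ i : ℤ, ∃ v : V, ∀ᶠ n in (U : Filter ℕ),
      (p n).getVert (((t n : ℤ) + i).toNat) = v := by
    intro i
    have hfin := finite_ball hconn hlf a i.natAbs
    have hmem : {n : ℕ | (p n).getVert (((t n : ℤ) + i).toNat)
        ∈ {v : V | G.dist a v ≤ i.natAbs}} ∈ U := Ultrafilter.mem_coe.mp (hball i)
    have hsub : {n : ℕ | (p n).getVert (((t n : ℤ) + i).toNat)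
          ∈ {v : V | G.dist a v ≤ i.natAbs}}
        ⊆ ⋃ v ∈ {v : V | G.dist a v ≤ i.natAbs},
          {n : ℕ | (p n).getVert (((t n : ℤ) + i).toNat) = v} :=
      fun n hn => Set.mem_biUnion hn rfl
    obtain ⟨v, _, hv⟩ := (Ultrafilter.finite_biUnion_mem_iff hfin).mp
      (Filter.mem_of_superset hmem hsub)
    exact ⟨v, Ultrafilter.mem_coe.mpr hv⟩
  choose g hg using hgex
  have hadjg : ∀ i : ℤ, G.Adj (g i) (g (i + 1)) := by
    intro i
    obtain ⟨n, hPn, hgi, hgi1⟩ := ((hP (i.natAbs + 1)).and ((hg i).and (hg (i + 1)))).exists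
    obtain ⟨hgva, hM1, hM2⟩ := hPn
    have hm1 : ((t n : ℤ) + (i + 1)).toNat = ((t n : ℤ) + i).toNat + 1 := by omega
    have hlt : ((t n : ℤ) + i).toNat < (p n).length := by omega
    have hadj := (p n).adj_getVert_succ hlt
    rw [← hm1] at hadj
    rwa [hgi, hgi1] at hadj
  refine ⟨g, hadjg, ?_⟩
  intro i j hij
  have hall : ∀ᶠ n in (U : Filter ℕ), ∀ k ∈ Finset.Icc i j,
      (p n).getVert (((t n : ℤ) + k).toNat) = g k :=
    (Filter.eventually_all_finset _).mpr (fun k _ => hg k)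
  obtain ⟨n, hPn, hfg⟩ := ((hP (i.natAbs + j.natAbs)).and hall).exists
  obtain ⟨hgva, hM1, hM2⟩ := hPn
  have hii' : ((t n : ℤ) + i).toNat ≤ ((t n : ℤ) + j).toNat := by omega
  have hjlen : ((t n : ℤ) + j).toNat ≤ (p n).length := by omega
  have key := sub_geodesic hw (hgeo n) _ _ hii' hjlen
  have hei : (p n).getVert (((t n : ℤ) + i).toNat) = g i :=
    hfg i (Finset.mem_Icc.mpr ⟨le_rfl, hij⟩)
  have hej : (p n).getVert (((t n : ℤ) + j).toNat) = g j :=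
    hfg j (Finset.mem_Icc.mpr ⟨hij, le_rfl⟩)
  rw [hei, hej] at key
  rw [key]
  congr 1
  refine (Finset.sum_nbij' (fun k : ℤ => ((t n : ℤ) + k).toNat)
    (fun k' : ℕ => (k' : ℤ) - (t n : ℤ)) ?_ ?_ ?_ ?_ ?_).symm
  · intro k hk
    rw [Finset.mem_Ico] at hk ⊢
    beta_reduce
    omega
  · intro k' hk'
    rw [Finset.mem_Ico] at hk' ⊢
    beta_reduce
    omega
  · intro k hk
    rw [Finset.mem_Ico] at hk
    beta_reduce
    omega
  · intro k' hk'
    rw [Finset.mem_Ico] at hk'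
    beta_reduce
    omega
  · intro k hk
    rw [Finset.mem_Ico] at hk
    have hk1 : (p n).getVert (((t n : ℤ) + k).toNat) = g k :=
      hfg k (Finset.mem_Icc.mpr ⟨hk.1, hk.2.le⟩)
    have hk2 : (p n).getVert (((t n : ℤ) + (k + 1)).toNat) = g (k + 1) :=
      hfg (k + 1) (Finset.mem_Icc.mpr ⟨by omega, by omega⟩)
    have hm1 : ((t n : ℤ) + (k + 1)).toNat = ((t n : ℤ) + k).toNat + 1 := by omega
    rw [← hk1, ← hk2, hm1]
end
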